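/- Suppose f : ℝ → ℝ is continuous and there exist θ > 2 and M > 0 such that 0 < θ·F(t) ≤ t·f(t) for all |t| ≥ M, where F(t) = ∫_0^t f(s) ds. Then for every θ̃ ∈ (2, θ) there exist M₁ > 0 and N₀ ∈ ℕ such that for all m ≥ N₀ and all |t| > M₁, 0 < θ̃·F_m(t) ≤ t·f_m(t), where f_m = ρ_m * f and F_m(t) = ∫_0^t f_m(s) ds. -/

import Mathlib

open MeasureTheory Set

private lemma aux_growth (F f : ℝ → ℝ) (hd : ∀ s, HasDerivAt F (f s) s)
    (M : ℝ) (hM : 0 < M)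
    (h : ∀ s, M ≤ s → 0 < F s ∧ 2 * F s ≤ s * f s) (B : ℝ) :
    ∃ M₂ : ℝ, M ≤ M₂ ∧ ∀ s, M₂ ≤ s → B ≤ F s := by
  have hFc : Continuous F := by
    rw [continuous_iff_continuousAt]; exact fun x => ((hd x).differentiableAt).continuousAt
  have hmono : MonotoneOn (fun s => F s / s ^ 2) (Set.Ici M) := by
    apply monotoneOn_of_deriv_nonneg (convex_Ici M)
    · exact hFc.continuousOn.div (continuous_pow 2).continuousOn
        (fun x hx => pow_ne_zero 2 (ne_of_gt (lt_of_lt_of_le hM hx)))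
    · rw [interior_Ici]
      intro x hx
      have hx0 : (0:ℝ) < x := lt_trans hM hx
      exact (((hd x).div (hasDerivAt_pow 2 x) (pow_ne_zero 2 hx0.ne')).differentiableAt).differentiableWithinAt
    · rw [interior_Ici]
      intro x hx
      have hx0 : (0:ℝ) < x := lt_trans hM hx
      have hd' := (hd x).div (hasDerivAt_pow 2 x) (pow_ne_zero 2 hx0.ne')
      rw [show deriv (fun s => F s / s ^ 2) x = _ from hd'.deriv]
      apply div_nonneg _ (by positivity)
      have h2 := (h x (le_of_lt hx)).2
      push_cast
      nlinarith [mul_nonneg hx0.le (sub_nonneg.mpr h2)]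
  have hFM : 0 < F M := (h M le_rfl).1
  have hq : 0 < F M / M ^ 2 := div_pos hFM (by positivity)
  refine ⟨max M (max 1 (B / (F M / M ^ 2))), le_max_left _ _, fun s hs => ?_⟩
  have hsM : M ≤ s := le_trans (le_max_left _ _) hs
  have hs1 : (1:ℝ) ≤ s := le_trans (le_trans (le_max_left _ _) (le_max_right _ _)) hs
  have hsB : B / (F M / M ^ 2) ≤ s := le_trans (le_trans (le_max_right _ _) (le_max_right _ _)) hs
  have hmle : F M / M ^ 2 ≤ F s / s ^ 2 := hmono (Set.mem_Ici.mpr le_rfl) (Set.mem_Ici.mpr hsM) hsM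
  have h2 : F M / M ^ 2 * s ^ 2 ≤ F s := by
    have := (le_div_iff₀ (by positivity : (0:ℝ) < s ^ 2)).mp hmle
    linarith
  have h3 : B ≤ F M / M ^ 2 * s := by
    rw [div_le_iff₀ hq] at hsB
    linarith [hsB]
  nlinarith [mul_nonneg hq.le (mul_nonneg (sub_nonneg.mpr hs1) (by linarith : (0:ℝ) ≤ s))]

private lemma aux_key (θ θt δ K a b v T s : ℝ)
    (hθt : 2 < θt) (hθ : θt < θ) (hδ : δ = (θ - θt) / 2)
    (hK : 0 ≤ K) (hv : |v| ≤ K)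
    (hT : θ / δ ≤ T) (hs : 0 < s) (hsT : s ≤ T + 1)
    (ha : θt * K / δ ≤ a) (ha0 : 0 < a)
    (hARs : θ * a ≤ s * b) :
    θt * (a - v) ≤ T * b := by
  subst hδ
  have hδ0 : 0 < (θ - θt) / 2 := by linarith
  have hθ2 : 2 < θ := lt_trans hθt hθ
  have hT0 : 0 < T := lt_of_lt_of_le (div_pos (by linarith) hδ0) hT
  have hδT : θ ≤ (θ - θt) / 2 * T := by
    rw [div_le_iff₀ hδ0] at hT; linarith
  have haK : θt * K ≤ (θ - θt) / 2 * a := by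
    rw [div_le_iff₀ hδ0] at ha; nlinarith
  have hb : 0 < b := by
    rcases le_or_gt b 0 with h | h
    · exfalso; nlinarith
    · exact h
  have hvK : -K ≤ v := (abs_le.mp hv).1
  have h1 : θt * (a - v) * (T + 1) ≤ θ * a * T := by
    nlinarith [mul_nonneg (sub_nonneg.mpr haK) hT0.le,
      mul_nonneg (mul_nonneg (by linarith : (0:ℝ) ≤ θt) (by linarith : (0:ℝ) ≤ v + K))
        (by linarith : (0:ℝ) ≤ T + 1),
      mul_nonneg (sub_nonneg.mpr hδT) ha0.le,
      mul_pos hδ0 ha0, mul_nonneg (mul_nonneg hδ0.le ha0.le) hT0.le]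
  have h2 : θ * a * T ≤ s * b * T := by nlinarith [mul_nonneg hT0.le (sub_nonneg.mpr hARs)]
  have h3 : s * b * T ≤ T * b * (T + 1) := by
    nlinarith [mul_nonneg (mul_nonneg hT0.le hb.le) (sub_nonneg.mpr hsT)]
  exact le_of_mul_le_mul_right (by linarith) (by linarith : (0:ℝ) < T + 1)

set_option maxHeartbeats 1000000 in
/-- The Ambrosetti–Rabinowitz condition is preserved under mollification, with a
slightly smaller exponent `θ̃ ∈ (2, θ)`. -/
theorem mollification_preserves_AR_condition
    (ρ : ℝ → ℝ)
    (hρ : ∀ t : ℝ, ρ t = if |t| < 1 then Real.exp (1 / (t ^ 2 - 1)) else 0)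
    (c : ℝ) (hc : c = (∫ t : ℝ, ρ t)⁻¹)
    (f : ℝ → ℝ) (hf : Continuous f)
    (θ M : ℝ) (hθ : 2 < θ) (hM : 0 < M)
    (F : ℝ → ℝ) (hF : ∀ t : ℝ, F t = ∫ s in (0:ℝ)..t, f s)
    (hAR : ∀ t : ℝ, M ≤ |t| → 0 < θ * F t ∧ θ * F t ≤ t * f t)
    (fm : ℕ → ℝ → ℝ)
    (hfm : ∀ (m : ℕ) (t : ℝ),
      fm m t = ∫ s : ℝ, (c * (m : ℝ) * ρ ((m : ℝ) * (t - s))) * f s)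
    (Fm : ℕ → ℝ → ℝ)
    (hFm : ∀ (m : ℕ) (t : ℝ), Fm m t = ∫ s in (0:ℝ)..t, fm m s) :
    ∀ θt : ℝ, 2 < θt → θt < θ →
      ∃ M₁ : ℝ, 0 < M₁ ∧ ∃ N₀ : ℕ, ∀ m : ℕ, N₀ ≤ m →
        ∀ t : ℝ, M₁ < |t| → 0 < θt * Fm m t ∧ θt * Fm m t ≤ t * fm m t := by
  intro θt hθt2 hθtθ
  -- basic facts about ρ
  have hρ' : ρ = fun t => expNegInvGlue (1 - t ^ 2) := by
    funext t
    rw [hρ]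
    by_cases h : |t| < 1
    · have ht2 : t ^ 2 < 1 := by nlinarith [abs_nonneg t, sq_abs t]
      rw [if_pos h]
      have h1 : ¬(1 - t ^ 2 ≤ 0) := by linarith
      rw [expNegInvGlue, if_neg h1]
      congr 1
      have h2 : t ^ 2 - 1 ≠ 0 := by intro hh; nlinarith
      rw [div_eq_iff h2]
      have h3 : (1:ℝ) - t ^ 2 ≠ 0 := by intro hh; nlinarith
      field_simp
      ring
    · push_neg at h
      have ht2 : 1 ≤ t ^ 2 := by nlinarith [sq_abs t, abs_nonneg t]
      rw [if_neg (not_lt.mpr h), expNegInvGlue.zero_of_nonpos (by linarith)]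
  have hρc : Continuous ρ := by
    rw [hρ']
    exact (expNegInvGlue.contDiff (n := 1)).continuous.comp (by continuity)
  have hρ0 : ∀ t : ℝ, 0 ≤ ρ t := fun t => by rw [hρ']; exact expNegInvGlue.nonneg _
  have hρz : ∀ t : ℝ, 1 ≤ |t| → ρ t = 0 := by
    intro t ht
    rw [hρ']
    exact expNegInvGlue.zero_of_nonpos (by nlinarith [sq_abs t, abs_nonneg t])
  have hρsupp : HasCompactSupport ρ := by
    apply HasCompactSupport.intro (isCompact_Icc (a := (-1:ℝ)) (b := 1))
    intro t ht
    rw [Set.mem_Icc, not_and_or, not_le, not_le] at ht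
    apply hρz
    rcases ht with h | h
    · exact le_abs.mpr (Or.inr (by linarith))
    · exact le_abs.mpr (Or.inl (by linarith))
  have hρint : Integrable ρ := hρc.integrable_of_hasCompactSupport hρsupp
  have hIpos : 0 < ∫ t : ℝ, ρ t := by
    have hlow : ∀ t ∈ Set.Icc (-(1:ℝ)/2) (1/2), Real.exp (-2) ≤ ρ t := by
      intro t ht
      rw [Set.mem_Icc] at ht
      have habs : |t| < 1 := by rw [abs_lt]; constructor <;> linarith
      rw [hρ t, if_pos habs]
      apply Real.exp_le_exp.mpr
      have h1 : t ^ 2 ≤ 1/4 := by nlinarith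
      have h2 : t ^ 2 - 1 < 0 := by nlinarith
      rw [le_div_iff_of_neg h2]
      nlinarith
    have h1 : Real.exp (-2) * 1 ≤ ∫ t in Set.Icc (-(1:ℝ)/2) (1/2), ρ t := by
      have hconst : ∫ _t in Set.Icc (-(1:ℝ)/2) (1/2), Real.exp (-2) = Real.exp (-2) * 1 := by
        rw [setIntegral_const, Real.volume_real_Icc]
        norm_num
      rw [← hconst]
      apply setIntegral_mono_on ((integrableOn_const_iff (C := Real.exp (-2))).mpr (Or.inr (by
        rw [Real.volume_Icc]; exact ENNReal.ofReal_lt_top))) (hρint.integrableOn)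
        measurableSet_Icc hlow
    calc (0:ℝ) < Real.exp (-2) * 1 := by positivity
      _ ≤ ∫ t in Set.Icc (-(1:ℝ)/2) (1/2), ρ t := h1
      _ ≤ ∫ t : ℝ, ρ t := setIntegral_le_integral hρint (Filter.Eventually.of_forall hρ0)
  have hc_pos : 0 < c := by rw [hc]; exact inv_pos.mpr hIpos
  have hcint : (∫ u : ℝ, c * ρ u) = 1 := by
    rw [integral_const_mul, hc, inv_mul_cancel₀ hIpos.ne']
  -- F facts
  have hFd : ∀ t : ℝ, HasDerivAt F (f t) t := by
    have hFeq : F = fun u => ∫ s in (0:ℝ)..u, f s := funext hF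
    intro t
    rw [hFeq]
    exact intervalIntegral.integral_hasDerivAt_right (hf.intervalIntegrable _ _)
      (hf.stronglyMeasurableAtFilter _ _) hf.continuousAt
  have hFc : Continuous F := by
    rw [continuous_iff_continuousAt]
    exact fun x => ((hFd x).differentiableAt).continuousAt
  obtain ⟨K, hK0, hK⟩ : ∃ K, 0 ≤ K ∧ ∀ s ∈ Set.Icc (-1:ℝ) 1, |F s| ≤ K := by
    obtain ⟨x, hx, hmax⟩ := (isCompact_Icc (a := (-1:ℝ)) (b := 1)).exists_isMaxOn (Set.nonempty_Icc.mpr (by norm_num))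
      (continuous_abs.comp hFc).continuousOn
    exact ⟨|F x|, abs_nonneg _, fun s hs => hmax hs⟩
  -- constants
  have hδ : 0 < (θ - θt) / 2 := by linarith
  set B₀ : ℝ := max (θt * K / ((θ - θt) / 2)) (K + 1) with hB₀def
  have hB₀K : K + 1 ≤ B₀ := le_max_right _ _
  have hB₀δ : θt * K / ((θ - θt) / 2) ≤ B₀ := le_max_left _ _
  -- growth of F on both sides
  have hARpos : ∀ s : ℝ, M ≤ s → 0 < F s ∧ 2 * F s ≤ s * f s := by
    intro s hs
    have habs : M ≤ |s| := by rw [abs_of_nonneg (le_trans hM.le hs)]; exact hs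
    obtain ⟨h1, h2⟩ := hAR s habs
    constructor
    · nlinarith
    · nlinarith
  have hARneg : ∀ s : ℝ, M ≤ s → 0 < F (-s) ∧ 2 * F (-s) ≤ s * (-f (-s)) := by
    intro s hs
    have habs : M ≤ |(-s)| := by
      rw [abs_neg, abs_of_nonneg (le_trans hM.le hs)]; exact hs
    obtain ⟨h1, h2⟩ := hAR (-s) habs
    constructor
    · nlinarith
    · nlinarith
  obtain ⟨M₂, hM₂M, hM₂⟩ := aux_growth F f hFd M hM hARpos B₀
  obtain ⟨M₃, hM₃M, hM₃⟩ := aux_growth (fun s => F (-s)) (fun s => -f (-s))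
    (fun s => by simpa [Function.comp_def] using (hFd (-s)).comp s (hasDerivAt_neg s)) M hM hARneg B₀
  set M₁ : ℝ := max (max (M₂ + 1) (M₃ + 1)) (θ / ((θ - θt) / 2)) with hM₁def
  have hM₁pos : 0 < M₁ :=
    lt_of_lt_of_le (div_pos (by linarith) hδ) (le_max_right _ _)
  refine ⟨M₁, hM₁pos, 1, fun m hm t ht => ?_⟩
  have hm1 : (1:ℝ) ≤ (m:ℝ) := by exact_mod_cast hm
  have hm0 : (0:ℝ) < (m:ℝ) := by linarith
  -- generic compact support / integrability for c * ρ * g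
  have hCS : ∀ g : ℝ → ℝ, HasCompactSupport (fun u => c * ρ u * g u) := by
    intro g
    apply HasCompactSupport.intro (isCompact_Icc (a := (-1:ℝ)) (b := 1))
    intro u hu
    rw [Set.mem_Icc, not_and_or, not_le, not_le] at hu
    have : ρ u = 0 := by
      apply hρz
      rcases hu with h | h
      · exact le_abs.mpr (Or.inr (by linarith))
      · exact le_abs.mpr (Or.inl (by linarith))
    simp [this]
  have hIg : ∀ g : ℝ → ℝ, Continuous g → Integrable (fun u => c * ρ u * g u) := by
    intro g hg
    exact ((continuous_const.mul hρc).mul hg).integrable_of_hasCompactSupport (hCS g)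
  -- substitution formula for fm
  have hsub : ∀ x : ℝ, fm m x = ∫ u : ℝ, c * ρ u * f (x - u / (m:ℝ)) := by
    intro x
    rw [hfm]
    have e1 : (fun s => (c * (m:ℝ) * ρ ((m:ℝ) * (x - s))) * f s)
        = fun s => (fun y => c * (m:ℝ) * ρ ((m:ℝ) * y) * f (x - y)) (x - s) := by
      funext s
      simp only [sub_sub_cancel]
    rw [e1, integral_sub_left_eq_self (fun y => c * (m:ℝ) * ρ ((m:ℝ) * y) * f (x - y)) volume x]
    have e2 : (fun y : ℝ => c * (m:ℝ) * ρ ((m:ℝ) * y) * f (x - y))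
        = fun y => (fun u => (m:ℝ) * (c * ρ u * f (x - u / (m:ℝ)))) ((m:ℝ) * y) := by
      funext y
      simp only [mul_div_cancel_left₀ _ (ne_of_gt hm0)]
      ring
    rw [e2, MeasureTheory.Measure.integral_comp_mul_left
      (fun u => (m:ℝ) * (c * ρ u * f (x - u / (m:ℝ)))) (m:ℝ)]
    rw [integral_const_mul, smul_eq_mul, abs_of_pos (inv_pos.mpr hm0)]
    field_simp
  -- continuity of fm m
  have hfmeq : fm m = fun x => ∫ u : ℝ, c * ρ u * f (x - u / (m:ℝ)) := funext hsub
  have hfmc : Continuous (fm m) := by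
    rw [hfmeq, continuous_iff_continuousAt]
    intro x₀
    obtain ⟨Kf, hKf0, hKf⟩ : ∃ Kf, 0 ≤ Kf ∧ ∀ y ∈ Set.Icc (x₀ - 2) (x₀ + 2), |f y| ≤ Kf := by
      obtain ⟨x, hx, hmax⟩ := (isCompact_Icc (a := x₀ - 2) (b := x₀ + 2)).exists_isMaxOn
        (Set.nonempty_Icc.mpr (by linarith)) (continuous_abs.comp hf).continuousOn
      exact ⟨|f x|, abs_nonneg _, fun s hs => hmax hs⟩
    apply MeasureTheory.continuousAt_of_dominated (bound := fun u => c * ρ u * Kf)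
    · exact Filter.Eventually.of_forall fun x =>
        ((continuous_const.mul hρc).mul
          (hf.comp (continuous_const.sub (continuous_id.div_const _)))).aestronglyMeasurable
    · filter_upwards [Metric.ball_mem_nhds x₀ one_pos] with x hx
      apply Filter.Eventually.of_forall
      intro u
      rw [Real.norm_eq_abs, abs_mul, abs_mul, abs_of_nonneg hc_pos.le, abs_of_nonneg (hρ0 u)]
      by_cases hu : ρ u = 0
      · simp [hu]
      · have hu1 : |u| < 1 := by
          by_contra hcon
          exact hu (hρz u (not_lt.mp hcon))
        have hum : |u / (m:ℝ)| ≤ 1 := by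
          rw [abs_div, abs_of_pos hm0, div_le_one hm0]
          linarith
        have hmem : x - u / (m:ℝ) ∈ Set.Icc (x₀ - 2) (x₀ + 2) := by
          rw [Metric.mem_ball, Real.dist_eq, abs_lt] at hx
          rw [Set.mem_Icc]
          have := abs_le.mp hum
          constructor <;> linarith [this.1, this.2]
        exact mul_le_mul_of_nonneg_left (hKf _ hmem) (mul_nonneg hc_pos.le (hρ0 u))
    · exact hIg _ continuous_const
    · apply Filter.Eventually.of_forall
      intro u
      exact (continuous_const.mul (hf.comp (continuous_id.sub continuous_const))).continuousAt
  -- Fm identity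
  have hFmeq : ∀ x : ℝ, Fm m x
      = ∫ u : ℝ, c * ρ u * (F (x - u / (m:ℝ)) - F (-(u / (m:ℝ)))) := by
    have hderiv : ∀ y : ℝ, HasDerivAt
        (fun z => ∫ u : ℝ, c * ρ u * (F (z - u / (m:ℝ)) - F (-(u / (m:ℝ))))) (fm m y) y := by
      intro y
      obtain ⟨Kf, hKf0, hKf⟩ : ∃ Kf, 0 ≤ Kf ∧ ∀ z ∈ Set.Icc (y - 2) (y + 2), |f z| ≤ Kf := by
        obtain ⟨x, hx, hmax⟩ := (isCompact_Icc (a := y - 2) (b := y + 2)).exists_isMaxOn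
          (Set.nonempty_Icc.mpr (by linarith)) (continuous_abs.comp hf).continuousOn
        exact ⟨|f x|, abs_nonneg _, fun z hz => hmax hz⟩
      have hmeas : ∀ᶠ z in nhds y, AEStronglyMeasurable
          (fun u : ℝ => c * ρ u * (F (z - u / (m:ℝ)) - F (-(u / (m:ℝ))))) volume :=
        Filter.Eventually.of_forall fun z =>
          ((continuous_const.mul hρc).mul
            ((hFc.comp (continuous_const.sub (continuous_id.div_const _))).sub
              (hFc.comp (continuous_id.div_const _).neg))).aestronglyMeasurable
      have hint : Integrable (fun u : ℝ => c * ρ u * (F (y - u / (m:ℝ)) - F (-(u / (m:ℝ))))) :=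
        hIg _ ((hFc.comp (continuous_const.sub (continuous_id.div_const _))).sub
              (hFc.comp (continuous_id.div_const _).neg))
      have hmeas' : AEStronglyMeasurable (fun u : ℝ => c * ρ u * f (y - u / (m:ℝ))) volume :=
        ((continuous_const.mul hρc).mul
          (hf.comp (continuous_const.sub (continuous_id.div_const _)))).aestronglyMeasurable
      have hbdd : ∀ᵐ u : ℝ, ∀ z ∈ Metric.ball y 1,
          ‖c * ρ u * f (z - u / (m:ℝ))‖ ≤ c * ρ u * Kf := by
        apply Filter.Eventually.of_forall
        intro u z hz
        rw [Real.norm_eq_abs, abs_mul, abs_mul, abs_of_nonneg hc_pos.le, abs_of_nonneg (hρ0 u)]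
        by_cases hu : ρ u = 0
        · simp [hu]
        · have hu1 : |u| < 1 := by
            by_contra hcon
            exact hu (hρz u (not_lt.mp hcon))
          have hum : |u / (m:ℝ)| ≤ 1 := by
            rw [abs_div, abs_of_pos hm0, div_le_one hm0]
            linarith
          have hmem : z - u / (m:ℝ) ∈ Set.Icc (y - 2) (y + 2) := by
            rw [Metric.mem_ball, Real.dist_eq, abs_lt] at hz
            rw [Set.mem_Icc]
            have := abs_le.mp hum
            constructor <;> linarith [this.1, this.2]
          exact mul_le_mul_of_nonneg_left (hKf _ hmem) (mul_nonneg hc_pos.le (hρ0 u))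
      have hbint : Integrable (fun u : ℝ => c * ρ u * Kf) := hIg _ continuous_const
      have hdiff : ∀ᵐ u : ℝ, ∀ z ∈ Metric.ball y 1,
          HasDerivAt (fun z => c * ρ u * (F (z - u / (m:ℝ)) - F (-(u / (m:ℝ)))))
            (c * ρ u * f (z - u / (m:ℝ))) z := by
        apply Filter.Eventually.of_forall
        intro u z _
        have h1 : HasDerivAt (fun z : ℝ => z - u / (m:ℝ)) 1 z := (hasDerivAt_id z).sub_const _
        have h2 : HasDerivAt (fun z : ℝ => F (z - u / (m:ℝ))) (f (z - u / (m:ℝ))) z := by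
          simpa [Function.comp_def] using (hFd (z - u / (m:ℝ))).comp z h1
        exact (h2.sub_const _).const_mul _
      have h := hasDerivAt_integral_of_dominated_loc_of_deriv_le (Metric.ball_mem_nhds y one_pos) hmeas hint hmeas'
        hbdd hbint hdiff
      rw [hsub y]
      exact h.2
    intro x
    rw [hFm, intervalIntegral.integral_eq_sub_of_hasDerivAt (fun y _ => hderiv y)
      (hfmc.intervalIntegrable _ _)]
    simp only [zero_sub, sub_self, mul_zero, integral_zero, sub_zero]
  -- bounds involving the point t
  have htθδ : θ / ((θ - θt) / 2) ≤ |t| := le_trans (le_max_right _ _) (le_of_lt ht)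
  have hM₂t : M₂ + 1 ≤ |t| :=
    le_of_lt (lt_of_le_of_lt (le_trans (le_max_left _ _) (le_max_left _ _)) ht)
  have hM₃t : M₃ + 1 ≤ |t| :=
    le_of_lt (lt_of_le_of_lt (le_trans (le_max_right _ _) (le_max_left _ _)) ht)
  -- pointwise key inequalities
  have hkey : ∀ u : ℝ, ρ u ≠ 0 →
      B₀ ≤ F (t - u / (m:ℝ)) ∧ F (-(u / (m:ℝ))) ≤ K ∧
      θt * (F (t - u / (m:ℝ)) - F (-(u / (m:ℝ)))) ≤ t * f (t - u / (m:ℝ)) := by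
    intro u hu
    have hu1 : |u| < 1 := by
      by_contra hcon
      exact hu (hρz u (not_lt.mp hcon))
    have hum : |u / (m:ℝ)| ≤ 1 := by
      rw [abs_div, abs_of_pos hm0, div_le_one hm0]
      linarith
    have humle := abs_le.mp hum
    have hvK : |F (-(u / (m:ℝ)))| ≤ K := by
      apply hK
      rw [Set.mem_Icc]
      constructor
      · linarith [humle.2]
      · linarith [humle.1]
    rcases le_or_gt 0 t with htpos | htneg
    · -- positive side
      have habs : |t| = t := abs_of_nonneg htpos
      rw [habs] at htθδ hM₂t hM₃t
      have hsM₂ : M₂ ≤ t - u / (m:ℝ) := by linarith [humle.2]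
      have hFs : B₀ ≤ F (t - u / (m:ℝ)) := hM₂ _ hsM₂
      have hs0 : 0 < t - u / (m:ℝ) := lt_of_lt_of_le hM (le_trans hM₂M hsM₂)
      have hsM : M ≤ |t - u / (m:ℝ)| := by
        rw [abs_of_pos hs0]
        linarith [hM₂M]
      obtain ⟨hARs1, hARs2⟩ := hAR _ hsM
      have hsle : t - u / (m:ℝ) ≤ t + 1 := by linarith [humle.1]
      have hFs0 : 0 < F (t - u / (m:ℝ)) := lt_of_lt_of_le (by linarith) hFs
      exact ⟨hFs, (abs_le.mp hvK).2,
        aux_key θ θt ((θ - θt) / 2) K (F (t - u / (m:ℝ))) (f (t - u / (m:ℝ)))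
          (F (-(u / (m:ℝ)))) t (t - u / (m:ℝ)) hθt2 hθtθ rfl hK0 hvK htθδ hs0 hsle
          (le_trans hB₀δ hFs) hFs0 hARs2⟩
    · -- negative side
      have habs : |t| = -t := abs_of_neg htneg
      rw [habs] at htθδ hM₂t hM₃t
      have hsM₃ : M₃ ≤ -(t - u / (m:ℝ)) := by
        have := humle.1
        linarith
      have hFs : B₀ ≤ F (t - u / (m:ℝ)) := by
        have h := hM₃ (-(t - u / (m:ℝ))) hsM₃
        simpa using h
      have hs0 : 0 < -(t - u / (m:ℝ)) := lt_of_lt_of_le hM (le_trans hM₃M hsM₃)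
      have hsM : M ≤ |t - u / (m:ℝ)| := by
        rw [abs_of_neg (by linarith : t - u / (m:ℝ) < 0)]
        linarith [hM₃M]
      obtain ⟨hARs1, hARs2⟩ := hAR _ hsM
      have hsle : -(t - u / (m:ℝ)) ≤ -t + 1 := by linarith [humle.2]
      have hFs0 : 0 < F (t - u / (m:ℝ)) := lt_of_lt_of_le (by linarith) hFs
      have hARs' : θ * F (t - u / (m:ℝ)) ≤ (-(t - u / (m:ℝ))) * (-f (t - u / (m:ℝ))) := by
        rw [neg_mul_neg]
        exact hARs2
      have hfin := aux_key θ θt ((θ - θt) / 2) K (F (t - u / (m:ℝ))) (-f (t - u / (m:ℝ)))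
        (F (-(u / (m:ℝ)))) (-t) (-(t - u / (m:ℝ))) hθt2 hθtθ rfl hK0 hvK htθδ hs0 hsle
        (le_trans hB₀δ hFs) hFs0 hARs'
      refine ⟨hFs, (abs_le.mp hvK).2, ?_⟩
      nlinarith [hfin]
  -- integrability
  have hint1 : Integrable (fun u : ℝ => c * ρ u * (F (t - u / (m:ℝ)) - F (-(u / (m:ℝ))))) :=
    hIg _ ((hFc.comp (continuous_const.sub (continuous_id.div_const _))).sub
      (hFc.comp (continuous_id.div_const _).neg))
  have hint2 : Integrable (fun u : ℝ => c * ρ u * (B₀ - K)) := hIg _ continuous_const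
  have hint3 : Integrable (fun u : ℝ => c * ρ u * f (t - u / (m:ℝ))) :=
    hIg _ (hf.comp (continuous_const.sub (continuous_id.div_const _)))
  -- lower bound for Fm
  have hFmlow : B₀ - K ≤ Fm m t := by
    rw [hFmeq t]
    have h0 : B₀ - K = ∫ u : ℝ, c * ρ u * (B₀ - K) := by
      rw [integral_mul_const, hcint, one_mul]
    rw [h0]
    apply integral_mono hint2 hint1
    intro u
    by_cases hu : ρ u = 0
    · simp [hu]
    · obtain ⟨h1, h2, _⟩ := hkey u hu
      exact mul_le_mul_of_nonneg_left (by linarith) (mul_nonneg hc_pos.le (hρ0 u))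
  have hpos : 0 < θt * Fm m t := by
    apply mul_pos (by linarith)
    exact lt_of_lt_of_le (by linarith) hFmlow
  have hmain : θt * Fm m t ≤ t * fm m t := by
    rw [hFmeq t, hsub t, ← integral_const_mul θt, ← integral_const_mul t]
    apply integral_mono (hint1.const_mul θt) (hint3.const_mul t)
    intro u
    by_cases hu : ρ u = 0
    · simp [hu]
    · obtain ⟨_, _, h3⟩ := hkey u hu
      nlinarith [mul_nonneg (mul_nonneg hc_pos.le (hρ0 u)) (sub_nonneg.mpr h3)]
  exact ⟨hpos, hmain⟩
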